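/- Let kᵢ, ℓᵢ (1 ≤ i ≤ m), b, n₁, n₂ be positive integers with kᵢ, ℓᵢ ≤ b for all i and 9b² < n₁, 9b² < n₂. For each i let Rᵢ be a family of kᵢ×ℓᵢ rectangles in Z_{n₁} × Z_{n₂}, and suppose R = R₁ ∪ ... ∪ R_m is proj-intersecting. Then either |Rᵢ| ≤ ℓᵢ·n₁ for all i, or |Rᵢ| ≤ kᵢ·n₂ for all i. -/

import Mathlib

/-- Cyclic distance in `ZMod n`: the smaller of the two distances along the cycle. -/
def cdist {n : ℕ} (u v : ZMod n) : ℕ := min (u - v).val (v - u).val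

/-- The cyclic interval of length `k` with left end `i` in `ZMod n`. -/
def cInt {n : ℕ} (i : ZMod n) (k : ℕ) : Finset (ZMod n) :=
  (Finset.range k).image (fun j : ℕ => (i + (j : ZMod n) : ZMod n))

/-- Distance between two cyclic intervals: minimum cyclic distance between elements. -/
noncomputable def iDist {n : ℕ} (I J : Finset (ZMod n)) : ℕ :=
  sInf {d | ∃ u ∈ I, ∃ v ∈ J, d = cdist u v}

/-- `P` is a `k × ℓ` rectangle in `ZMod n₁ × ZMod n₂`. -/
def IsRect {n₁ n₂ : ℕ} (k ℓ : ℕ) (P : Finset (ZMod n₁) × Finset (ZMod n₂)) : Prop :=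
  (∃ i, P.1 = cInt i k) ∧ (∃ j, P.2 = cInt j ℓ)

/-- A family of rectangles is proj-intersecting if any two members have intersecting
projections in at least one coordinate. -/
def ProjIntersecting {n₁ n₂ : ℕ} (R : Finset (Finset (ZMod n₁) × Finset (ZMod n₂))) : Prop :=
  ∀ P ∈ R, ∀ Q ∈ R, (P.1 ∩ Q.1).Nonempty ∨ (P.2 ∩ Q.2).Nonempty

section helpers
variable {n : ℕ}

lemma zmod_cast_val [NeZero n] (x : ZMod n) : ((x.val : ℕ) : ZMod n) = x :=
  ZMod.natCast_rightInverse x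

lemma recover_eq [NeZero n] (a c : ZMod n) : a = c + (((a - c).val : ℕ) : ZMod n) := by
  rw [zmod_cast_val]; ring

lemma val_eq_of_cast_sub [NeZero n] {x : ZMod n} {A B : ℕ}
    (h : x = (A : ZMod n) - (B : ZMod n)) (hBA : B ≤ A) (hA : A - B < n) : x.val = A - B := by
  rw [h, ← Nat.cast_sub hBA, ZMod.val_cast_of_lt hA]

lemma mem_cInt_iff [NeZero n] {k : ℕ} (hk : k ≤ n) {i x : ZMod n} :
    x ∈ cInt i k ↔ (x - i).val < k := by
  unfold cInt
  simp only [Finset.mem_image, Finset.mem_range]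
  constructor
  · rintro ⟨j, hj, rfl⟩
    have h : (i + (j : ZMod n) - i) = (j : ZMod n) := by ring
    rw [h, ZMod.val_cast_of_lt (lt_of_lt_of_le hj hk)]; exact hj
  · intro h
    exact ⟨(x - i).val, h, by rw [zmod_cast_val]; ring⟩

lemma close_in_same [NeZero n] {lW b : ℕ} (hlW : lW ≤ b) (hb' : 9*b^2 < n) {qW u v : ZMod n}
    (hu : (u - qW).val < lW) (hv : (v - qW).val < lW) :
    (u - v).val < b ∨ (v - u).val < b := by
  have hb : 0 < b := by omega
  have hbb : b ≤ b*b := Nat.le_mul_of_pos_left b (by omega)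
  have hb2 : 9*b^2 = 9*(b*b) := by ring
  have hu' : u = qW + (((u - qW).val : ℕ) : ZMod n) := recover_eq u qW
  have hv' : v = qW + (((v - qW).val : ℕ) : ZMod n) := recover_eq v qW
  set s := (u - qW).val
  set s' := (v - qW).val
  rcases le_total s' s with hss | hss
  · left
    have he : u - v = ((s : ℕ) : ZMod n) - ((s' : ℕ) : ZMod n) := by
      linear_combination hu' - hv'
    have := val_eq_of_cast_sub he hss (by omega)
    omega
  · right
    have he : v - u = ((s' : ℕ) : ZMod n) - ((s : ℕ) : ZMod n) := by
      linear_combination hv' - hu'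
    have := val_eq_of_cast_sub he hss (by omega)
    omega

lemma conf_aux [NeZero n] {b mP mW : ℕ} (hb : 0 < b) (hmP : mP ≤ b) (hmW : mW ≤ b)
    (hn : 9*b^2 < n) {p pW x χ : ZMod n}
    (hx : (x - p).val < mP) (hχP : (χ - p).val < mP) (hχW : (χ - pW).val < mW) :
    (pW - (x - (((2*b - 2 : ℕ)) : ZMod n))).val ≤ 4*b - 4 := by
  have hbb : b ≤ b*b := Nat.le_mul_of_pos_left b (by omega)
  have hb2 : 9*b^2 = 9*(b*b) := by ring
  set e := (x - p).val
  set s'' := (χ - p).val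
  set s := (χ - pW).val
  have h1 : x = p + ((e : ℕ) : ZMod n) := recover_eq x p
  have h2 : χ = p + ((s'' : ℕ) : ZMod n) := recover_eq χ p
  have h3 : χ = pW + ((s : ℕ) : ZMod n) := recover_eq χ pW
  have he : pW - (x - (((2*b - 2 : ℕ)) : ZMod n))
      = (((s'' + (2*b - 2) : ℕ)) : ZMod n) - (((e + s : ℕ)) : ZMod n) := by
    push_cast
    linear_combination h2 - h3 - h1
  have := val_eq_of_cast_sub he (by omega) (by omega)
  omega

lemma conf_aux2 [NeZero n] {b lW l₀ : ℕ} (hb : 0 < b) (hlW : lW ≤ b) (hl₀ : l₀ ≤ b)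
    (hn : 9*b^2 < n) {q q₀ u v : ZMod n}
    (hu : (u - q).val < lW) (hv : (v - q₀).val < l₀)
    (hclose : (u - v).val < b ∨ (v - u).val < b) :
    (q - (q₀ - (((2*b - 2 : ℕ)) : ZMod n))).val ≤ 4*b - 4 := by
  have hbb : b ≤ b*b := Nat.le_mul_of_pos_left b (by omega)
  have hb2 : 9*b^2 = 9*(b*b) := by ring
  set s := (u - q).val
  set s₀ := (v - q₀).val
  have h1 : u = q + ((s : ℕ) : ZMod n) := recover_eq u q
  have h2 : v = q₀ + ((s₀ : ℕ) : ZMod n) := recover_eq v q₀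
  rcases hclose with h | h
  · set d := (u - v).val
    have h3 : u = v + ((d : ℕ) : ZMod n) := recover_eq u v
    have he : q - (q₀ - (((2*b - 2 : ℕ)) : ZMod n))
        = (((d + s₀ + (2*b - 2) : ℕ)) : ZMod n) - ((s : ℕ) : ZMod n) := by
      push_cast
      linear_combination h3 + h2 - h1
    have := val_eq_of_cast_sub he (by omega) (by omega)
    omega
  · set d := (v - u).val
    have h3 : v = u + ((d : ℕ) : ZMod n) := recover_eq v u
    have he : q - (q₀ - (((2*b - 2 : ℕ)) : ZMod n))
        = (((s₀ + (2*b - 2) : ℕ)) : ZMod n) - (((d + s : ℕ)) : ZMod n) := by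
      push_cast
      linear_combination h2 - h3 - h1
    have := val_eq_of_cast_sub he (by omega) (by omega)
    omega

lemma close_of_inter [NeZero n] {a c : ℕ} (ha : a ≤ n) (hc : c ≤ n) {i j : ZMod n}
    (h : ((cInt i a) ∩ (cInt j c)).Nonempty) : (i - j).val < c ∨ (j - i).val < a := by
  obtain ⟨x, hx⟩ := h
  rw [Finset.mem_inter] at hx
  have h1 : (x - i).val < a := (mem_cInt_iff ha).1 hx.1
  have h2 : (x - j).val < c := (mem_cInt_iff hc).1 hx.2
  have hxi : x = i + (((x - i).val : ℕ) : ZMod n) := recover_eq x i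
  have hxj : x = j + (((x - j).val : ℕ) : ZMod n) := recover_eq x j
  set s := (x - i).val with hs
  set s' := (x - j).val with hs'
  rcases le_total s' s with hss | hss
  · right
    have he : j - i = ((s - s' : ℕ) : ZMod n) := by
      rw [Nat.cast_sub hss]; linear_combination hxi - hxj
    rw [he, ZMod.val_cast_of_lt (by omega)]; omega
  · left
    have he : i - j = ((s' - s : ℕ) : ZMod n) := by
      rw [Nat.cast_sub hss]; linear_combination hxj - hxi
    rw [he, ZMod.val_cast_of_lt (by omega)]; omega

lemma offset_lt [NeZero n] {k b : ℕ} (hk : 0 < k) (hkb : k ≤ b) (hn : 9*b^2 < n)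
    {x y : ZMod n} (h : (x - y).val < k ∨ (y - x).val < k) :
    (x - (y - (((k-1 : ℕ)) : ZMod n))).val < 2*k - 1 := by
  have hbb : b ≤ b*b := Nat.le_mul_of_pos_left b (by omega)
  have hb2 : 9*b^2 = 9*(b*b) := by ring
  rcases h with h | h
  · set d := (x - y).val with hd
    have hx : x = y + ((d : ℕ) : ZMod n) := recover_eq x y
    have he : x - (y - (((k-1 : ℕ)) : ZMod n)) = (((d + (k-1) : ℕ)) : ZMod n) - ((0:ℕ) : ZMod n) := by
      push_cast
      linear_combination hx
    have := val_eq_of_cast_sub he (by omega) (by omega)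
    omega
  · set d := (y - x).val with hd
    have hy : y = x + ((d : ℕ) : ZMod n) := recover_eq y x
    have he : x - (y - (((k-1 : ℕ)) : ZMod n)) = (((k-1 : ℕ)) : ZMod n) - ((d : ℕ) : ZMod n) := by
      linear_combination - hy
    have := val_eq_of_cast_sub he (by omega) (by omega)
    omega

lemma t_overlap_aux [NeZero n] {l b : ℕ} (hl : 0 < l) (hlb : l ≤ b) (hM : 9*b^2 < n)
    {tP tQ : ℕ} (htP : tP ≤ 4*b - 4) (hQP : tQ ≤ tP)
    (h : ((tP : ZMod n) - (tQ : ZMod n)).val < l ∨ ((tQ : ZMod n) - (tP : ZMod n)).val < l) :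
    tP - tQ < l := by
  have hbb : b ≤ b*b := Nat.le_mul_of_pos_left b (by omega)
  have hb2 : 9*b^2 = 9*(b*b) := by ring
  rcases Nat.eq_or_lt_of_le hQP with heq | hlt
  · omega
  have h1 : ((tP : ZMod n) - (tQ : ZMod n)).val = tP - tQ := by
    have he : (tP : ZMod n) - (tQ : ZMod n) = ((tP:ℕ) : ZMod n) - ((tQ:ℕ) : ZMod n) := rfl
    exact val_eq_of_cast_sub he hQP (by omega)
  have h2 : ((tQ : ZMod n) - (tP : ZMod n)).val = (n + tQ) - tP := by
    have he : (tQ : ZMod n) - (tP : ZMod n) = (((n + tQ : ℕ)) : ZMod n) - ((tP:ℕ) : ZMod n) := by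
      push_cast [ZMod.natCast_self]; ring
    exact val_eq_of_cast_sub he (by omega) (by omega)
  omega

lemma t_overlap [NeZero n] {l b : ℕ} (hl : 0 < l) (hlb : l ≤ b) (hM : 9*b^2 < n)
    {tP tQ : ℕ} (htP : tP ≤ 4*b - 4) (htQ : tQ ≤ 4*b - 4)
    (h : ((tP : ZMod n) - (tQ : ZMod n)).val < l ∨ ((tQ : ZMod n) - (tP : ZMod n)).val < l) :
    tP < tQ + l ∧ tQ < tP + l := by
  rcases le_total tQ tP with hle | hle
  · have := t_overlap_aux hl hlb hM htP hle h
    omega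
  · have := t_overlap_aux hl hlb hM htQ hle h.symm
    omega

end helpers

lemma endgame {N M b k l : ℕ} (hb : 0 < b) (hk : 0 < k) (hkb : k ≤ b)
    (hl : 0 < l) (hlb : l ≤ b) (hN : 9*b^2 < N) (hM : 9*b^2 < M)
    (S : Finset (Finset (ZMod N) × Finset (ZMod M)))
    (hrect : ∀ P ∈ S, (∃ p, P.1 = cInt p k) ∧ (∃ q, P.2 = cInt q l))
    (hproj : ∀ P ∈ S, ∀ Q ∈ S, (P.1 ∩ Q.1).Nonempty ∨ (P.2 ∩ Q.2).Nonempty)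
    (w₀ : ZMod M)
    (hconf : ∀ P ∈ S, ∀ q, P.2 = cInt q l → (q - w₀).val ≤ 4*b - 4) :
    S.card ≤ l * N := by
  classical
  rw [Nat.mul_comm]
  have hbb : b ≤ b*b := Nat.le_mul_of_pos_left b (by omega)
  have hb2 : 9*b^2 = 9*(b*b) := by ring
  haveI : NeZero N := ⟨by omega⟩
  haveI : NeZero M := ⟨by omega⟩
  have hkN : k ≤ N := by omega
  have hlM : l ≤ M := by omega
  set e1 : (Finset (ZMod N) × Finset (ZMod M)) → ZMod N :=
    fun P => if h : ∃ p, P.1 = cInt p k then h.choose else 0 with he1def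
  set e2 : (Finset (ZMod N) × Finset (ZMod M)) → ZMod M :=
    fun P => if h : ∃ q, P.2 = cInt q l then h.choose else 0 with he2def
  have he1 : ∀ P ∈ S, P.1 = cInt (e1 P) k := by
    intro P hP
    obtain ⟨hex, _⟩ := hrect P hP
    simp only [he1def, dif_pos hex]
    exact hex.choose_spec
  have he2 : ∀ P ∈ S, P.2 = cInt (e2 P) l := by
    intro P hP
    obtain ⟨_, hex⟩ := hrect P hP
    simp only [he2def, dif_pos hex]
    exact hex.choose_spec
  set t : (Finset (ZMod N) × Finset (ZMod M)) → ℕ := fun P => (e2 P - w₀).val with htdef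
  have ht : ∀ P ∈ S, t P ≤ 4*b - 4 := fun P hP => hconf P hP _ (he2 P hP)
  have he2w : ∀ P, e2 P = w₀ + ((t P : ℕ) : ZMod M) := fun P => recover_eq _ _
  -- overlap translation
  have hT1 : ∀ P ∈ S, ∀ Q ∈ S, (P.2 ∩ Q.2).Nonempty → t P < t Q + l ∧ t Q < t P + l := by
    intro P hP Q hQ hne
    rw [he2 P hP, he2 Q hQ] at hne
    have hc := close_of_inter hlM hlM hne
    have hPQ : e2 P - e2 Q = ((t P : ℕ) : ZMod M) - ((t Q : ℕ) : ZMod M) := by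
      rw [he2w P, he2w Q]; ring
    have hQP : e2 Q - e2 P = ((t Q : ℕ) : ZMod M) - ((t P : ℕ) : ZMod M) := by
      rw [he2w P, he2w Q]; ring
    rw [hPQ, hQP] at hc
    exact t_overlap hl hlb hM (ht P hP) (ht Q hQ) hc
  -- injectivity helper
  have hrec : ∀ P ∈ S, ∀ Q ∈ S, e1 P = e1 Q → t P = t Q → P = Q := by
    intro P hP Q hQ h1 h2
    have hfst : P.1 = Q.1 := by rw [he1 P hP, he1 Q hQ, h1]
    have hsnd : P.2 = Q.2 := by rw [he2 P hP, he2 Q hQ]; rw [he2w P, he2w Q, h2]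
    exact Prod.ext hfst hsnd
  have he1off : ∀ (anchor : ZMod N) (P Q : Finset (ZMod N) × Finset (ZMod M)),
      (e1 P - anchor).val = (e1 Q - anchor).val → e1 P = e1 Q := by
    intro anchor P Q h
    have hp := recover_eq (e1 P) anchor
    have hq := recover_eq (e1 Q) anchor
    rw [hp, hq, h]
  rcases S.eq_empty_or_nonempty with rfl | hSne
  · simp
  obtain ⟨U, hU, hUmin⟩ := S.exists_min_image t hSne
  obtain ⟨V, hV, hVmax⟩ := S.exists_max_image t hSne
  by_cases hyz : t V ≤ t U + (l - 1)
  · -- common point case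
    have hcard : S.card ≤ ((Finset.univ : Finset (ZMod N)) ×ˢ Finset.range l).card := by
      apply Finset.card_le_card_of_injOn (fun P => (e1 P, t V - t P))
      · intro P hP
        simp only [Finset.mem_coe, Finset.mem_product, Finset.mem_univ, Finset.mem_range, true_and]
        have h1 := hUmin P hP
        have h2 := hVmax P hP
        omega
      · intro P hP Q hQ hPQ
        simp only [Finset.mem_coe] at hP hQ
        simp only [Prod.mk.injEq] at hPQ
        have h1 := hVmax P hP
        have h2 := hVmax Q hQ
        exact hrec P hP Q hQ hPQ.1 (by omega)
    rw [Finset.card_product, Finset.card_univ, ZMod.card, Finset.card_range] at hcard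
    exact hcard
  · -- no common point
    push_neg at hyz
    set y := t U + (l - 1) with hydef
    set z := t V with hzdef
    set g := z - y with hgdef
    have hg1 : 1 ≤ g := by omega
    have hzb : z ≤ 4*b - 4 := ht V hV
    set S1 := S.filter (fun P => y < t P) with hS1def
    set Sr := S.filter (fun P => ¬ y < t P) with hSrdef
    set S2 := Sr.filter (fun P => t P + (l - 1) < z) with hS2def
    set S3 := Sr.filter (fun P => ¬ t P + (l - 1) < z) with hS3def
    have hsplit1 : S1.card + Sr.card = S.card :=
      Finset.card_filter_add_card_filter_not _
    have hsplit2 : S2.card + S3.card = Sr.card :=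
      Finset.card_filter_add_card_filter_not _
    -- bound on S1
    have hbd1 : S1.card ≤ (2*k - 1) * g := by
      have hcard : S1.card ≤ (Finset.range (2*k - 1) ×ˢ Finset.range g).card := by
        apply Finset.card_le_card_of_injOn
          (fun P => ((e1 P - (e1 U - (((k-1:ℕ)) : ZMod N))).val, t P - (y + 1)))
        · intro P hP
          rw [Finset.mem_coe, Finset.mem_filter] at hP
          obtain ⟨hPS, hPy⟩ := hP
          have hPU : ¬ (P.2 ∩ U.2).Nonempty := by
            intro hne
            have := hT1 P hPS U hU hne
            omega
          have h1 : (P.1 ∩ U.1).Nonempty := (hproj P hPS U hU).resolve_right hPU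
          rw [he1 P hPS, he1 U hU] at h1
          have ho := offset_lt hk hkb hN (close_of_inter hkN hkN h1)
          simp only [Finset.mem_coe, Finset.mem_product, Finset.mem_range]
          have h2 := hVmax P hPS
          exact ⟨ho, by omega⟩
        · intro P hP Q hQ hPQ
          simp only [Finset.mem_coe, hS1def, Finset.mem_filter] at hP hQ
          simp only [Prod.mk.injEq] at hPQ
          exact hrec P hP.1 Q hQ.1 (he1off _ _ _ hPQ.1) (by omega)
      rw [Finset.card_product, Finset.card_range, Finset.card_range] at hcard
      exact hcard
    -- bound on S2
    have hbd2 : S2.card ≤ (2*k - 1) * (min g l) := by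
      have hcard : S2.card ≤ (Finset.range (2*k - 1) ×ˢ Finset.range (min g l)).card := by
        apply Finset.card_le_card_of_injOn
          (fun P => ((e1 P - (e1 V - (((k-1:ℕ)) : ZMod N))).val, t P + (l - 1) - y))
        · intro P hP
          rw [Finset.mem_coe, Finset.mem_filter, hSrdef, Finset.mem_filter] at hP
          obtain ⟨⟨hPS, hPy⟩, hPz⟩ := hP
          have hPV : ¬ (P.2 ∩ V.2).Nonempty := by
            intro hne
            have := hT1 P hPS V hV hne
            omega
          have h1 : (P.1 ∩ V.1).Nonempty := (hproj P hPS V hV).resolve_right hPV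
          rw [he1 P hPS, he1 V hV] at h1
          have ho := offset_lt hk hkb hN (close_of_inter hkN hkN h1)
          simp only [Finset.mem_coe, Finset.mem_product, Finset.mem_range, lt_min_iff]
          have h2 := hUmin P hPS
          exact ⟨ho, by omega, by omega⟩
        · intro P hP Q hQ hPQ
          simp only [Finset.mem_coe, hS2def, Finset.mem_filter, hSrdef] at hP hQ
          simp only [Prod.mk.injEq] at hPQ
          have h2 := hUmin P hP.1.1
          have h3 := hUmin Q hQ.1.1
          exact hrec P hP.1.1 Q hQ.1.1 (he1off _ _ _ hPQ.1) (by omega)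
      rw [Finset.card_product, Finset.card_range, Finset.card_range] at hcard
      exact hcard
    -- bound on S3
    have hbd3 : S3.card ≤ N * (l - g) := by
      have hcard : S3.card ≤ ((Finset.univ : Finset (ZMod N)) ×ˢ Finset.range (l - g)).card := by
        apply Finset.card_le_card_of_injOn (fun P => (e1 P, t P + (l - 1) - z))
        · intro P hP
          rw [Finset.mem_coe, Finset.mem_filter, hSrdef, Finset.mem_filter] at hP
          obtain ⟨⟨hPS, hPy⟩, hPz⟩ := hP
          simp only [Finset.mem_coe, Finset.mem_product, Finset.mem_univ, Finset.mem_range, true_and]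
          omega
        · intro P hP Q hQ hPQ
          simp only [Finset.mem_coe, hS3def, Finset.mem_filter, hSrdef] at hP hQ
          simp only [Prod.mk.injEq] at hPQ
          obtain ⟨⟨hPS, hPy⟩, hPz⟩ := hP
          obtain ⟨⟨hQS, hQy⟩, hQz⟩ := hQ
          exact hrec P hPS Q hQS hPQ.1 (by omega)
      rw [Finset.card_product, Finset.card_univ, ZMod.card, Finset.card_range] at hcard
      exact hcard
    -- final arithmetic
    have hgle : g ≤ 4*b - 3 - l := by omega
    rcases le_total g l with hgl | hlg
    · rw [min_eq_left hgl] at hbd2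
      have h4k : (2*k - 1) + (2*k - 1) ≤ N := by omega
      have hA : (2*k - 1) * g + (2*k - 1) * g ≤ N * g := by
        have : (2*k - 1) * g + (2*k - 1) * g = ((2*k - 1) + (2*k - 1)) * g := by ring
        rw [this]
        exact Nat.mul_le_mul_right g h4k
      have hB : N * g + N * (l - g) = N * l := by
        rw [← Nat.mul_add]
        congr 1
        omega
      omega
    · rw [min_eq_right hlg] at hbd2
      have hl0 : l - g = 0 := by omega
      rw [hl0, Nat.mul_zero] at hbd3
      have hsum : (2*k - 1) * g + (2*k - 1) * l = (2*k - 1) * (g + l) := by ring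
      have hprod : (2*k - 1) * (g + l) ≤ (2*b - 1) * (4*b - 3) := by
        apply Nat.mul_le_mul (by omega) (by omega)
      obtain ⟨b', rfl⟩ : ∃ b', b = b' + 1 := ⟨b - 1, by omega⟩
      have hexp1 : (2*(b'+1) - 1) * (4*(b'+1) - 3) = 8*(b'*b') + 6*b' + 1 := by
        have h1 : 2*(b'+1) - 1 = 2*b' + 1 := by omega
        have h2 : 4*(b'+1) - 3 = 4*b' + 1 := by omega
        rw [h1, h2]; ring
      have hexp2 : 9*(b'+1)^2 = 9*(b'*b') + 18*b' + 9 := by ring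
      have hNl : N ≤ N * l := Nat.le_mul_of_pos_right N hl
      omega

theorem stmt9 (m b n₁ n₂ : ℕ) (k ℓ : Fin m → ℕ)
    (hk : ∀ i, 0 < k i ∧ k i ≤ b) (hl : ∀ i, 0 < ℓ i ∧ ℓ i ≤ b)
    (h1 : 9 * b ^ 2 < n₁) (h2 : 9 * b ^ 2 < n₂)
    (R : Fin m → Finset (Finset (ZMod n₁) × Finset (ZMod n₂)))
    (hrect : ∀ i, ∀ P ∈ R i, IsRect (k i) (ℓ i) P)
    (hproj : ProjIntersecting (Finset.univ.biUnion R)) :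
    (∀ i, (R i).card ≤ ℓ i * n₁) ∨ (∀ i, (R i).card ≤ k i * n₂) := by
  classical
  rcases Nat.eq_zero_or_pos m with hm | hm
  · left; intro i; exact absurd i.isLt (by omega)
  have i00 : Fin m := ⟨0, hm⟩
  have hb : 0 < b := lt_of_lt_of_le (hk i00).1 (hk i00).2
  have hbb : b ≤ b*b := Nat.le_mul_of_pos_left b (by omega)
  have hb2 : 9*b^2 = 9*(b*b) := by ring
  haveI : NeZero n₁ := ⟨by omega⟩
  haveI : NeZero n₂ := ⟨by omega⟩
  have hkn₁ : ∀ i', k i' ≤ n₁ := fun i' => by have := (hk i').2; omega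
  have hln₂ : ∀ i', ℓ i' ≤ n₂ := fun i' => by have := (hl i').2; omega
  have hbn₁ : b ≤ n₁ := by omega
  have hbn₂ : b ≤ n₂ := by omega
  set F := Finset.univ.biUnion R with hF
  have hmemF : ∀ i, ∀ P ∈ R i, P ∈ F := by
    intro i P hP; rw [hF]; exact Finset.mem_biUnion.2 ⟨i, Finset.mem_univ i, hP⟩
  have hproj' : ∀ P ∈ F, ∀ Q ∈ F, (P.1 ∩ Q.1).Nonempty ∨ (P.2 ∩ Q.2).Nonempty := hproj
  have hFrect : ∀ P ∈ F, ∃ i : Fin m, (∃ p, P.1 = cInt p (k i)) ∧ (∃ q, P.2 = cInt q (ℓ i)) := by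
    intro P hP
    rw [hF] at hP
    obtain ⟨i, _, hPi⟩ := Finset.mem_biUnion.1 hP
    exact ⟨i, hrect i P hPi⟩
  by_cases hfar : ∃ P ∈ F, ∃ Q ∈ F, ∀ u ∈ P.2, ∀ v ∈ Q.2, b ≤ (u - v).val ∧ b ≤ (v - u).val
  · right
    obtain ⟨P, hP, Q, hQ, hfarPQ⟩ := hfar
    obtain ⟨iP, ⟨p, hp⟩, ⟨qP, hqP⟩⟩ := hFrect P hP
    obtain ⟨iQ, ⟨p', hp'⟩, ⟨qQ, hqQ⟩⟩ := hFrect Q hQ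
    have hPQ1 : (P.1 ∩ Q.1).Nonempty := by
      rcases hproj' P hP Q hQ with h | h
      · exact h
      · exfalso
        obtain ⟨x, hx⟩ := h
        rw [Finset.mem_inter] at hx
        have hthis := hfarPQ x hx.1 x hx.2
        have h0 : x - x = 0 := by ring
        rw [h0, ZMod.val_zero] at hthis
        omega
    obtain ⟨x, hx⟩ := hPQ1
    rw [Finset.mem_inter] at hx
    have hkey : ∀ W ∈ F, (W.1 ∩ P.1).Nonempty ∨ (W.1 ∩ Q.1).Nonempty := by
      intro W hW
      obtain ⟨iW, ⟨pW, hpW⟩, ⟨qW, hqW⟩⟩ := hFrect W hW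
      rcases hproj' W hW P hP with h1 | h1
      · exact Or.inl h1
      rcases hproj' W hW Q hQ with h2 | h2
      · exact Or.inr h2
      exfalso
      obtain ⟨u, hu⟩ := h1; rw [Finset.mem_inter] at hu
      obtain ⟨v, hv⟩ := h2; rw [Finset.mem_inter] at hv
      have hu' : (u - qW).val < ℓ iW := by
        have := hu.1; rw [hqW] at this
        exact (mem_cInt_iff (hln₂ iW)).1 this
      have hv' : (v - qW).val < ℓ iW := by
        have := hv.1; rw [hqW] at this
        exact (mem_cInt_iff (hln₂ iW)).1 this
      have hcl := close_in_same (hl iW).2 h2 hu' hv'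
      have hff := hfarPQ u hu.2 v hv.2
      rcases hcl with h | h <;> omega
    have hconf1 : ∀ W ∈ F, ∀ mW, 0 < mW → mW ≤ b → ∀ pW, W.1 = cInt pW mW →
        (pW - (x - (((2*b - 2 : ℕ)) : ZMod n₁))).val ≤ 4*b - 4 := by
      intro W hW mW hmW0 hmWb pW hpWeq
      rcases hkey W hW with h | h
      · obtain ⟨χ, hχ⟩ := h; rw [Finset.mem_inter] at hχ
        have hχW : (χ - pW).val < mW := by
          have := hχ.1; rw [hpWeq] at this
          exact (mem_cInt_iff (le_trans hmWb hbn₁)).1 this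
        have hχP : (χ - p).val < k iP := by
          have := hχ.2; rw [hp] at this
          exact (mem_cInt_iff (hkn₁ iP)).1 this
        have hxP : (x - p).val < k iP := by
          have := hx.1; rw [hp] at this
          exact (mem_cInt_iff (hkn₁ iP)).1 this
        exact conf_aux hb (hk iP).2 hmWb h1 hxP hχP hχW
      · obtain ⟨χ, hχ⟩ := h; rw [Finset.mem_inter] at hχ
        have hχW : (χ - pW).val < mW := by
          have := hχ.1; rw [hpWeq] at this
          exact (mem_cInt_iff (le_trans hmWb hbn₁)).1 this
        have hχQ : (χ - p').val < k iQ := by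
          have := hχ.2; rw [hp'] at this
          exact (mem_cInt_iff (hkn₁ iQ)).1 this
        have hxQ : (x - p').val < k iQ := by
          have := hx.2; rw [hp'] at this
          exact (mem_cInt_iff (hkn₁ iQ)).1 this
        exact conf_aux hb (hk iQ).2 hmWb h1 hxQ hχQ hχW
    intro j
    set S' := (R j).image (fun P => (P.2, P.1)) with hS'
    have hswapinj : Function.Injective
        (fun P : Finset (ZMod n₁) × Finset (ZMod n₂) => (P.2, P.1)) := by
      intro P Q h
      simp only [Prod.mk.injEq] at h
      exact Prod.ext h.2 h.1
    have hcardeq : S'.card = (R j).card := Finset.card_image_of_injective _ hswapinj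
    have hrectS : ∀ P' ∈ S', (∃ p, P'.1 = cInt p (ℓ j)) ∧ (∃ q, P'.2 = cInt q (k j)) := by
      intro P' hP'
      rw [hS'] at hP'
      obtain ⟨P, hPmem, rfl⟩ := Finset.mem_image.1 hP'
      obtain ⟨⟨pp, hpp⟩, ⟨qq, hqq⟩⟩ := hrect j P hPmem
      exact ⟨⟨qq, hqq⟩, ⟨pp, hpp⟩⟩
    have hprojS : ∀ P' ∈ S', ∀ Q' ∈ S', (P'.1 ∩ Q'.1).Nonempty ∨ (P'.2 ∩ Q'.2).Nonempty := by
      intro P' hP' Q' hQ'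
      rw [hS'] at hP' hQ'
      obtain ⟨Pa, hPa, rfl⟩ := Finset.mem_image.1 hP'
      obtain ⟨Qa, hQa, rfl⟩ := Finset.mem_image.1 hQ'
      exact (hproj' Pa (hmemF j Pa hPa) Qa (hmemF j Qa hQa)).symm
    have hconfS : ∀ P' ∈ S', ∀ q, P'.2 = cInt q (k j) →
        (q - (x - (((2*b - 2 : ℕ)) : ZMod n₁))).val ≤ 4*b - 4 := by
      intro P' hP' q hq
      rw [hS'] at hP'
      obtain ⟨Pa, hPa, rfl⟩ := Finset.mem_image.1 hP'
      exact hconf1 Pa (hmemF j Pa hPa) (k j) (hk j).1 (hk j).2 q hq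
    have hfin := endgame hb (hl j).1 (hl j).2 (hk j).1 (hk j).2 h2 h1 S' hrectS hprojS
      (x - (((2*b - 2 : ℕ)) : ZMod n₁)) hconfS
    rw [hcardeq] at hfin
    exact hfin
  · left
    push_neg at hfar
    intro i
    rcases (R i).eq_empty_or_nonempty with hRe | ⟨P₀, hP₀⟩
    · simp [hRe]
    have hP₀F : P₀ ∈ F := hmemF i P₀ hP₀
    obtain ⟨_, ⟨q₀, hq₀⟩⟩ := hrect i P₀ hP₀
    have hconf2 : ∀ W ∈ F, ∀ lW, 0 < lW → lW ≤ b → ∀ q, W.2 = cInt q lW →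
        (q - (q₀ - (((2*b - 2 : ℕ)) : ZMod n₂))).val ≤ 4*b - 4 := by
      intro W hW lW hlW0 hlWb q hqeq
      obtain ⟨u, hu, v, hv, hcl⟩ := hfar W hW P₀ hP₀F
      have hu' : (u - q).val < lW := by
        rw [hqeq] at hu
        exact (mem_cInt_iff (le_trans hlWb hbn₂)).1 hu
      have hv' : (v - q₀).val < ℓ i := by
        rw [hq₀] at hv
        exact (mem_cInt_iff (hln₂ i)).1 hv
      have hclose : (u - v).val < b ∨ (v - u).val < b := by
        by_cases hc : b ≤ (u - v).val
        · exact Or.inr (hcl hc)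
        · exact Or.inl (by omega)
      exact conf_aux2 hb hlWb (hl i).2 h2 hu' hv' hclose
    exact endgame hb (hk i).1 (hk i).2 (hl i).1 (hl i).2 h1 h2 (R i) (hrect i)
      (fun P hP Q hQ => hproj' P (hmemF i P hP) Q (hmemF i Q hQ))
      (q₀ - (((2*b - 2 : ℕ)) : ZMod n₂))
      (fun P hP q hq => hconf2 P (hmemF i P hP) (ℓ i) (hl i).1 (hl i).2 q hq)
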